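/- Let b>0, α∈ℝ, λ>1, m∈ℕ and M>0, and let G:[0,∞)→ℝ be continuously differentiable with |G(u)|≤M(1+u)^m and |G′(u)|≤M(1+u)^m for all u≥0. Then λ·∫₀^∞ u^{b}(u−α)·G(u)·e^{−λ(u−α)²/2} du = ∫₀^∞ u^{b−1}·(b·G(u)+u·G′(u))·e^{−λ(u−α)²/2} du. (This is the integration-by-parts step underlying the Bleistein recursion g_{k+1}=bG_k+uG_k′.) -/

import Mathlib

open MeasureTheory Real Set Filter

/-- The integration-by-parts step underlying the Bleistein recursion: for `b > 0`, `λ > 1`,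
and `G` continuously differentiable on `[0,∞)` of polynomial growth (together with its
derivative),
`λ ∫₀^∞ u^b (u-α) G(u) e^{-λ(u-α)²/2} du = ∫₀^∞ u^{b-1} (b G(u) + u G'(u)) e^{-λ(u-α)²/2} du`. -/
theorem bleistein_integration_by_parts (b α lam : ℝ) (hb : 0 < b) (hlam : 1 < lam)
    (m : ℕ) (M : ℝ) (hM : 0 < M) (G : ℝ → ℝ) (hG : ContDiffOn ℝ 1 G (Ici 0))
    (hGbd : ∀ u : ℝ, 0 ≤ u → |G u| ≤ M * (1 + u) ^ m)
    (hG'bd : ∀ u : ℝ, 0 ≤ u → |derivWithin G (Ici 0) u| ≤ M * (1 + u) ^ m) :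
    lam * ∫ u in Ioi (0 : ℝ), u ^ b * (u - α) * G u * Real.exp (-lam * (u - α) ^ 2 / 2)
      = ∫ u in Ioi (0 : ℝ),
          u ^ (b - 1) * (b * G u + u * derivWithin G (Ici 0) u) *
            Real.exp (-lam * (u - α) ^ 2 / 2) := by
  have hlam0 : (0:ℝ) < lam := lt_trans one_pos hlam
  set G' : ℝ → ℝ := derivWithin G (Ici 0) with hG'def
  set E : ℝ → ℝ := fun u => Real.exp (-lam * (u - α) ^ 2 / 2) with hEdef
  set f : ℝ → ℝ := fun u => u ^ b * G u * E u with hfdef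
  set g : ℝ → ℝ := fun u => u ^ (b - 1) * (b * G u + u * G' u) * E u with hgdef
  set h : ℝ → ℝ := fun u => u ^ b * (u - α) * G u * E u with hhdef
  set N : ℕ := m + 1 with hN
  -- key exponential bound
  have key : ∀ (k : ℕ) (u : ℝ), 0 ≤ u → (1 + u) ^ k * E u ≤
      Real.exp (lam * α ^ 2 / 2 + 2 * (k:ℝ) ^ 2 / lam) * Real.exp (-(lam/8) * u ^ 2) := by
    intro k u hu
    have he : 1 + u ≤ Real.exp u := by linarith [Real.add_one_le_exp u]
    have h1 : (1 + u) ^ k ≤ Real.exp ((k:ℝ) * u) := by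
      calc (1 + u) ^ k ≤ (Real.exp u) ^ k := pow_le_pow_left₀ (by linarith) he k
        _ = Real.exp ((k:ℝ) * u) := by rw [← Real.exp_nat_mul]
    have h2 : (1 + u) ^ k * E u ≤ Real.exp ((k:ℝ) * u) * E u :=
      mul_le_mul_of_nonneg_right h1 (Real.exp_nonneg _)
    refine h2.trans ?_
    show Real.exp ((k:ℝ)*u) * Real.exp (-lam * (u - α) ^ 2 / 2) ≤ _
    rw [← Real.exp_add, ← Real.exp_add]
    apply Real.exp_le_exp.2
    have hNu : (k:ℝ) * u * lam ≤ (lam/8) * u^2 * lam + 2*(k:ℝ)^2 := by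
      nlinarith [sq_nonneg (lam * u - 4 * (k:ℝ)), hlam0]
    have h3 : 2*(k:ℝ)^2/lam * lam = 2*(k:ℝ)^2 := div_mul_cancel₀ _ (ne_of_gt hlam0)
    rw [← mul_le_mul_iff_of_pos_right hlam0]
    nlinarith [mul_nonneg (mul_pos hlam0 hlam0).le (sq_nonneg (u - 2*α))]
  set C : ℝ := Real.exp (lam * α ^ 2 / 2 + 2 * (N:ℝ) ^ 2 / lam) with hC
  have hC0 : 0 < C := Real.exp_pos _
  have hE_pos : ∀ u, 0 < E u := fun u => Real.exp_pos _
  -- continuity facts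
  have hGcont : ContinuousOn G (Ici 0) := hG.continuousOn
  have hG'cont : ContinuousOn G' (Ici 0) :=
    hG.continuousOn_derivWithin (uniqueDiffOn_Ici 0) le_rfl
  have hEcont : Continuous E := by
    apply Real.continuous_exp.comp
    continuity
  have hrc : ∀ (s : ℝ), ContinuousOn (fun u : ℝ => u ^ s) (Ioi 0) := fun s x hx =>
    (Real.continuousAt_rpow_const x s (Or.inl (ne_of_gt hx))).continuousWithinAt
  -- measurability
  have hgmeas : AEStronglyMeasurable g (volume.restrict (Ioi 0)) := by
    apply ContinuousOn.aestronglyMeasurable _ measurableSet_Ioi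
    exact ((hrc (b-1)).mul ((continuousOn_const.mul (hGcont.mono Ioi_subset_Ici_self)).add
      (continuousOn_id.mul (hG'cont.mono Ioi_subset_Ici_self)))).mul hEcont.continuousOn
  have hhmeas : AEStronglyMeasurable h (volume.restrict (Ioi 0)) := by
    apply ContinuousOn.aestronglyMeasurable _ measurableSet_Ioi
    exact (((hrc b).mul (continuousOn_id.sub continuousOn_const)).mul
      (hGcont.mono Ioi_subset_Ici_self)).mul hEcont.continuousOn
  -- integrability of g
  have hg_int : IntegrableOn g (Ioi 0) := by
    apply Integrable.mono'
      ((integrableOn_rpow_mul_exp_neg_mul_sq (by positivity : (0:ℝ) < lam/8)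
        (by linarith : (-1:ℝ) < b - 1)).const_mul (M*(b+1)*C)) hgmeas
    filter_upwards [ae_restrict_mem measurableSet_Ioi] with u hu
    have hu0 : (0:ℝ) ≤ u := le_of_lt hu
    have hpm : (0:ℝ) ≤ (1+u)^m := by positivity
    have h1 : |b * G u + u * G' u| ≤ M*(b+1)*(1+u)^N := by
      calc |b * G u + u * G' u| ≤ b * |G u| + u * |G' u| := by
            refine (abs_add_le _ _).trans ?_
            rw [abs_mul, abs_mul, abs_of_nonneg hb.le, abs_of_nonneg hu0]
        _ ≤ b * (M * (1+u)^m) + u * (M * (1+u)^m) :=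
            add_le_add (mul_le_mul_of_nonneg_left (hGbd u hu0) hb.le)
              (mul_le_mul_of_nonneg_left (hG'bd u hu0) hu0)
        _ = M * (b + u) * (1+u)^m := by ring
        _ ≤ M*(b+1)*(1+u)^N := by
            rw [hN, pow_succ]
            nlinarith [mul_nonneg hM.le hpm, mul_nonneg (mul_nonneg hM.le hpm) hu0]
    have hrn : (0:ℝ) ≤ u ^ (b-1) := Real.rpow_nonneg hu0 _
    calc ‖g u‖ = u ^ (b-1) * |b * G u + u * G' u| * E u := by
          rw [Real.norm_eq_abs, hgdef]
          rw [abs_mul, abs_mul, abs_of_nonneg hrn, abs_of_nonneg (hE_pos u).le]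
      _ ≤ u ^ (b-1) * (M*(b+1)*(1+u)^N) * E u :=
          mul_le_mul_of_nonneg_right (mul_le_mul_of_nonneg_left h1 hrn) (hE_pos u).le
      _ = (M*(b+1)) * (u ^ (b-1) * ((1+u)^N * E u)) := by ring
      _ ≤ (M*(b+1)) * (u ^ (b-1) * (C * Real.exp (-(lam/8) * u ^ 2))) :=
          mul_le_mul_of_nonneg_left (mul_le_mul_of_nonneg_left (key N u hu0) hrn)
            (by positivity)
      _ = M*(b+1)*C * (u ^ (b-1) * Real.exp (-(lam/8) * u ^ 2)) := by ring
  -- integrability of h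
  have hh_int : IntegrableOn h (Ioi 0) := by
    apply Integrable.mono'
      ((integrableOn_rpow_mul_exp_neg_mul_sq (by positivity : (0:ℝ) < lam/8)
        (by linarith : (-1:ℝ) < b)).const_mul (M*(1+|α|)*C)) hhmeas
    filter_upwards [ae_restrict_mem measurableSet_Ioi] with u hu
    have hu0 : (0:ℝ) ≤ u := le_of_lt hu
    have hpm : (0:ℝ) ≤ (1+u)^m := by positivity
    have h1 : |u - α| * |G u| ≤ M*(1+|α|)*(1+u)^N := by
      have h2 : |u - α| ≤ (1+|α|)*(1+u) := by
        refine (abs_sub u α).trans ?_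
        rw [abs_of_nonneg hu0]
        nlinarith [abs_nonneg α]
      calc |u - α| * |G u| ≤ ((1+|α|)*(1+u)) * (M * (1+u)^m) := by
            apply mul_le_mul h2 (hGbd u hu0) (abs_nonneg _) (by positivity)
        _ = M*(1+|α|)*(1+u)^N := by rw [hN, pow_succ]; ring
    have hrn : (0:ℝ) ≤ u ^ b := Real.rpow_nonneg hu0 _
    calc ‖h u‖ = u ^ b * (|u - α| * |G u|) * E u := by
          rw [Real.norm_eq_abs, hhdef]
          rw [abs_mul, abs_mul, abs_mul, abs_of_nonneg hrn, abs_of_nonneg (hE_pos u).le]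
          ring
      _ ≤ u ^ b * (M*(1+|α|)*(1+u)^N) * E u :=
          mul_le_mul_of_nonneg_right (mul_le_mul_of_nonneg_left h1 hrn) (hE_pos u).le
      _ = (M*(1+|α|)) * (u ^ b * ((1+u)^N * E u)) := by ring
      _ ≤ (M*(1+|α|)) * (u ^ b * (C * Real.exp (-(lam/8) * u ^ 2))) :=
          mul_le_mul_of_nonneg_left (mul_le_mul_of_nonneg_left (key N u hu0) hrn)
            (by positivity)
      _ = M*(1+|α|)*C * (u ^ b * Real.exp (-(lam/8) * u ^ 2)) := by ring
  -- derivative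
  have hderiv : ∀ u ∈ Ioi (0:ℝ), HasDerivAt f (g u - lam * h u) u := by
    intro u hu
    have hu0 : (0:ℝ) < u := hu
    have hG_dA : HasDerivAt G (G' u) u :=
      (((hG.differentiableOn one_ne_zero) u hu0.le).hasDerivWithinAt).hasDerivAt (Ici_mem_nhds hu0)
    have hp : HasDerivAt (fun u : ℝ => u ^ b) (b * u ^ (b-1)) u :=
      Real.hasDerivAt_rpow_const (Or.inl (ne_of_gt hu0))
    have hw : HasDerivAt (fun u : ℝ => -lam * (u - α)^2 / 2) (-lam * (u - α)) u := by
      have hq : HasDerivAt (fun u : ℝ => (u - α)^2) (2*(u-α)) u := by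
        simpa using ((hasDerivAt_id u).sub_const α).fun_pow 2
      have := (hq.const_mul (-lam)).div_const 2
      refine this.congr_deriv ?_
      ring
    have hE_dA : HasDerivAt E (-lam*(u-α) * E u) u := by
      have := hw.exp
      simpa [hEdef, mul_comm] using this
    have total : HasDerivAt f
        ((b * u ^ (b-1) * G u + u ^ b * G' u) * E u + (u ^ b * G u) * (-lam*(u-α) * E u)) u :=
      (hp.mul hG_dA).mul hE_dA
    have hub : u ^ (b-1) * u = u ^ b := by
      rw [← Real.rpow_add_one (ne_of_gt hu0) (b-1)]
      norm_num
    convert total using 1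
    simp only [hgdef, hhdef]
    rw [← hub]
    ring
  -- continuity at 0
  have hfcont : ContinuousWithinAt f (Ici 0) 0 := by
    have : ContinuousOn f (Ici 0) := by
      apply ContinuousOn.mul _ hEcont.continuousOn
      apply ContinuousOn.mul _ hGcont
      intro x _
      exact (Real.continuousAt_rpow_const x b (Or.inr hb.le)).continuousWithinAt
    exact this 0 Set.self_mem_Ici
  -- tendsto at infinity
  have htend : Tendsto f atTop (nhds 0) := by
    set K : ℕ := ⌈b⌉₊ + m with hK
    set C2 : ℝ := Real.exp (lam * α ^ 2 / 2 + 2 * (K:ℝ) ^ 2 / lam) with hC2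
    apply squeeze_zero_norm' (a := fun u => M * C2 * Real.exp (-(lam/8) * u ^ 2))
    · filter_upwards [eventually_ge_atTop (0:ℝ)] with u hu0
      have h1 : u ^ b ≤ (1+u) ^ (⌈b⌉₊ : ℕ) := by
        calc u ^ b ≤ (1+u) ^ b := Real.rpow_le_rpow hu0 (by linarith) hb.le
          _ ≤ (1+u) ^ ((⌈b⌉₊:ℝ)) :=
              Real.rpow_le_rpow_of_exponent_le (by linarith) (Nat.le_ceil b)
          _ = (1+u) ^ (⌈b⌉₊ : ℕ) := Real.rpow_natCast _ _
      have h2 : ‖f u‖ ≤ (1+u) ^ (⌈b⌉₊:ℕ) * (M * (1+u)^m) * E u := by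
        rw [Real.norm_eq_abs, hfdef]
        rw [abs_mul, abs_mul, abs_of_nonneg (Real.rpow_nonneg hu0 b),
          abs_of_nonneg (hE_pos u).le]
        exact mul_le_mul_of_nonneg_right
          (mul_le_mul h1 (hGbd u hu0) (abs_nonneg _) (pow_nonneg (by linarith) _))
          (hE_pos u).le
      refine h2.trans ?_
      have h3 : (1+u) ^ (⌈b⌉₊:ℕ) * (M * (1+u)^m) * E u = M * ((1+u)^K * E u) := by
        rw [hK, pow_add]; ring
      rw [h3]
      have := key K u hu0
      calc M * ((1+u)^K * E u) ≤ M * (C2 * Real.exp (-(lam/8) * u ^ 2)) := by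
            gcongr
        _ = M * C2 * Real.exp (-(lam/8) * u ^ 2) := by ring
    · have h4 : Tendsto (fun u : ℝ => (lam/8) * u ^ 2) atTop atTop :=
        (tendsto_pow_atTop two_ne_zero).const_mul_atTop (by positivity)
      have h5 : Tendsto (fun u : ℝ => Real.exp (-((lam/8) * u ^ 2))) atTop (nhds 0) :=
        Real.tendsto_exp_neg_atTop_nhds_zero.comp h4
      have h6 : Tendsto (fun u : ℝ => Real.exp (-(lam/8) * u ^ 2)) atTop (nhds 0) := by
        simpa [neg_mul] using h5
      simpa using h6.const_mul (M * C2)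
  -- apply FTC
  have hf0 : f 0 = 0 := by
    rw [hfdef]
    simp [Real.zero_rpow (ne_of_gt hb)]
  have hint_eq : ∫ u in Ioi (0:ℝ), (g u - lam * h u) = 0 - f 0 :=
    integral_Ioi_of_hasDerivAt_of_tendsto hfcont hderiv
      (hg_int.sub (hh_int.const_mul lam)) htend
  rw [integral_sub hg_int (hh_int.const_mul lam), integral_const_mul, hf0, sub_zero] at hint_eq
  show lam * ∫ u in Ioi (0:ℝ), h u = ∫ u in Ioi (0:ℝ), g u
  linarith [hint_eq]
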